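/- Orthogonalizing transversal subspaces: let N₁, …, N_k be subspaces of ℝⁿ with dim N_i = d_i, ∑ d_i ≤ n, and |N₁ ∧ ⋯ ∧ N_k| ≥ ν > 0. Then there exists an invertible linear map A : ℝⁿ → ℝⁿ with ‖A‖ + ‖A^{-1}‖ ≤ C(n) ν^{-1} such that the images (A*)^{-1} N₁, …, (A*)^{-1} N_k are pairwise orthogonal subspaces of ℝⁿ. -/

import Mathlib

open scoped RealInnerProductSpace

set_option maxHeartbeats 1000000

lemma aux_abs_apply_le_norm {n : ℕ} (x : EuclideanSpace ℝ (Fin n)) (i : Fin n) : |x i| ≤ ‖x‖ := by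
  rw [EuclideanSpace.norm_eq, ← Real.sqrt_sq_eq_abs]
  apply Real.sqrt_le_sqrt
  apply Finset.single_le_sum (f := fun j => ‖x j‖^2) (fun j _ => by positivity) (Finset.mem_univ i) |>.trans_eq' ?_
  simp [sq_abs]

lemma aux_opnorm {n : ℕ} (M : Matrix (Fin n) (Fin n) ℝ) {c : ℝ} (hc : 0 ≤ c)
    (h : ∀ i j, |M i j| ≤ c) :
    ‖Matrix.toEuclideanCLM (𝕜 := ℝ) M‖ ≤ (n : ℝ)^2 * c := by
  apply ContinuousLinearMap.opNorm_le_bound _ (by positivity)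
  intro x
  have key : ∀ r : Fin n, |(Matrix.toEuclideanCLM (𝕜 := ℝ) M x) r| ≤ (n : ℝ) * c * ‖x‖ := by
    intro r
    show |∑ j, M r j * x j| ≤ _
    calc |∑ j, M r j * x j| ≤ ∑ j, |M r j * x j| := Finset.abs_sum_le_sum_abs _ _
      _ ≤ ∑ j : Fin n, c * ‖x‖ := by
          apply Finset.sum_le_sum
          intro j _
          rw [abs_mul]
          exact mul_le_mul (h r j) (aux_abs_apply_le_norm x j) (abs_nonneg _) hc
      _ = (n : ℝ) * (c * ‖x‖) := by simp [mul_comm]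
      _ = (n : ℝ) * c * ‖x‖ := by ring
  have hnn : (0:ℝ) ≤ (n : ℝ) * c * ‖x‖ := by positivity
  calc ‖Matrix.toEuclideanCLM (𝕜 := ℝ) M x‖
      = Real.sqrt (∑ r, ‖(Matrix.toEuclideanCLM (𝕜 := ℝ) M x) r‖^2) := EuclideanSpace.norm_eq _
    _ ≤ Real.sqrt (∑ r : Fin n, ((n:ℝ) * c * ‖x‖)^2) := by
        apply Real.sqrt_le_sqrt
        apply Finset.sum_le_sum
        intro r _
        rw [Real.norm_eq_abs]
        exact pow_le_pow_left₀ (abs_nonneg _) (key r) 2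
    _ ≤ Real.sqrt ((((n:ℝ) * ((n:ℝ) * c * ‖x‖))^2)) := by
        apply Real.sqrt_le_sqrt
        simp only [Finset.sum_const, Finset.card_univ, Fintype.card_fin, nsmul_eq_mul]
        have hn2 : (n:ℝ) ≤ (n:ℝ)^2 := by
          have := Nat.le_self_pow (two_ne_zero) n
          exact_mod_cast this
        nlinarith [sq_nonneg ((n:ℝ) * c * ‖x‖)]
    _ = (n:ℝ) * ((n:ℝ) * c * ‖x‖) := Real.sqrt_sq (by positivity)
    _ = (n:ℝ)^2 * c * ‖x‖ := by ring


/-- Orthogonalizing transversal subspaces: if `dim N_i = d_i`, `∑ d_i ≤ n` and the wedge of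
orthonormal bases of the `N_i` (square root of the Gram determinant) is `≥ ν > 0`, then
there is an invertible `A : ℝⁿ → ℝⁿ` with `‖A‖ + ‖A⁻¹‖ ≤ C(n) ν⁻¹` such that the images
`(A*)⁻¹ N_i` are pairwise orthogonal. -/
theorem stmt17 (n : ℕ) :
    ∃ C : ℝ, 0 < C ∧
      ∀ (k : ℕ) (d : Fin k → ℕ)
        (N : Fin k → Submodule ℝ (EuclideanSpace ℝ (Fin n)))
        (v : (i : Fin k) → Fin (d i) → EuclideanSpace ℝ (Fin n)),
        (∀ i, Orthonormal ℝ (v i)) →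
        (∀ i, Submodule.span ℝ (Set.range (v i)) = N i) →
        (∑ i, d i) ≤ n →
        ∀ ν : ℝ, 0 < ν →
          ν ≤ Real.sqrt (Matrix.det
            (Matrix.of fun p q : (i : Fin k) × Fin (d i) =>
              ⟪v p.1 p.2, v q.1 q.2⟫)) →
          ∃ A : EuclideanSpace ℝ (Fin n) ≃L[ℝ] EuclideanSpace ℝ (Fin n),
            ‖(A : EuclideanSpace ℝ (Fin n) →L[ℝ] EuclideanSpace ℝ (Fin n))‖ +
                ‖(A.symm : EuclideanSpace ℝ (Fin n) →L[ℝ] EuclideanSpace ℝ (Fin n))‖ ≤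
              C * ν⁻¹ ∧
            ∀ i j, i ≠ j →
              ∀ x ∈ Submodule.map (ContinuousLinearMap.adjoint
                  (A.symm : EuclideanSpace ℝ (Fin n) →L[ℝ] EuclideanSpace ℝ (Fin n)) :
                    EuclideanSpace ℝ (Fin n) →ₗ[ℝ] EuclideanSpace ℝ (Fin n)) (N i),
              ∀ y ∈ Submodule.map (ContinuousLinearMap.adjoint
                  (A.symm : EuclideanSpace ℝ (Fin n) →L[ℝ] EuclideanSpace ℝ (Fin n)) :
                    EuclideanSpace ℝ (Fin n) →ₗ[ℝ] EuclideanSpace ℝ (Fin n)) (N j),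
                ⟪x, y⟫ = 0 := by
  refine ⟨2 * (n:ℝ)^2 * n.factorial + 1, by positivity, ?_⟩
  intro k d N v hv hN hsum ν hν hνle
  let ι := (i : Fin k) × Fin (d i)
  let v' : ι → (EuclideanSpace ℝ (Fin n)) := fun p => v p.1 p.2
  set G := (Matrix.of fun p q : ι => ⟪v p.1 p.2, v q.1 q.2⟫ : Matrix ι ι ℝ) with hGdef
  -- card of ι
  have hcardι : Fintype.card ι = ∑ i, d i := by simp [ι, Fintype.card_sigma]
  have hcard_le : Fintype.card ι ≤ n := hcardι ▸ hsum
  -- positivity of det G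
  have hGpos : 0 < G.det := Real.sqrt_pos.mp (lt_of_lt_of_le hν hνle)
  -- unit norms
  have hvnorm : ∀ p : ι, ‖v' p‖ = 1 := fun p => (hv p.1).1 p.2
  -- entries of G bounded by 1
  have hGent : ∀ p q : ι, |G p q| ≤ 1 := by
    intro p q
    have := abs_real_inner_le_norm (v' p) (v' q)
    simpa [hGdef, hvnorm] using this
  -- ν ≤ n!
  have hν_le_fact : ν ≤ (n.factorial : ℝ) := by
    have h1 := Matrix.det_le (A := G) (abv := AbsoluteValue.abs) (x := (1:ℝ))
      (fun i j => by simpa using hGent i j)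
    simp only [one_pow, smul_eq_mul, mul_one, nsmul_eq_mul, AbsoluteValue.abs_apply] at h1
    have h2 : (Nat.factorial (Fintype.card ι) : ℝ) ≤ (n.factorial : ℝ) := by
      exact_mod_cast Nat.factorial_le hcard_le
    have h3 : (1:ℝ) ≤ (n.factorial : ℝ) := by exact_mod_cast Nat.one_le_iff_ne_zero.mpr n.factorial_ne_zero
    calc ν ≤ Real.sqrt G.det := hνle.trans_eq (by rw [hGdef])
      _ ≤ Real.sqrt ((n.factorial : ℝ)^2) := by
          apply Real.sqrt_le_sqrt
          have : G.det ≤ (n.factorial : ℝ) := le_trans (le_abs_self _) (h1.trans h2)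
          nlinarith
      _ = (n.factorial : ℝ) := Real.sqrt_sq (by positivity)
  -- orthogonal complement
  set S := Submodule.span ℝ (Set.range v') with hSdef
  have hfinrankS : Module.finrank ℝ S ≤ Fintype.card ι := finrank_range_le_card v'
  have hWrank : n - ∑ i, d i ≤ Module.finrank ℝ Sᗮ := by
    have h1 : Module.finrank ℝ S + Module.finrank ℝ Sᗮ = n := by
      rw [Submodule.finrank_add_finrank_orthogonal]
      simp [finrank_euclideanSpace_fin]
    rw [← hcardι]
    omega
  -- orthonormal complement vectors
  let w : Fin (n - ∑ i, d i) → (EuclideanSpace ℝ (Fin n)) := fun l =>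
    ((stdOrthonormalBasis ℝ Sᗮ) (Fin.castLE hWrank l) : (EuclideanSpace ℝ (Fin n)))
  have hw_mem : ∀ l, w l ∈ Sᗮ := fun l => ((stdOrthonormalBasis ℝ Sᗮ) (Fin.castLE hWrank l)).2
  have hw_inner : ∀ l l', ⟪w l, w l'⟫ = if l = l' then 1 else 0 := by
    intro l l'
    have h := (stdOrthonormalBasis ℝ Sᗮ).orthonormal
    rw [orthonormal_iff_ite] at h
    have h2 := h (Fin.castLE hWrank l) (Fin.castLE hWrank l')
    rw [Submodule.coe_inner] at h2
    rw [show (w l : (EuclideanSpace ℝ (Fin n))) = _ from rfl]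
    rw [h2]
    congr 1
    simp [Fin.castLE, Fin.ext_iff]
  have hvw : ∀ (p : ι) l, ⟪v' p, w l⟫ = 0 := by
    intro p l
    have : v' p ∈ S := Submodule.subset_span (Set.mem_range_self p)
    exact ((hw_mem l) (v' p) this).symm ▸ (hw_mem l (v' p) this)
  -- combined family
  let u : ι ⊕ Fin (n - ∑ i, d i) → (EuclideanSpace ℝ (Fin n)) := Sum.elim v' w
  -- index equivalence
  have hcard' : Fintype.card (ι ⊕ Fin (n - ∑ i, d i)) = n := by
    simp [Fintype.card_sum, hcardι]
    omega
  let σ : (ι ⊕ Fin (n - ∑ i, d i)) ≃ Fin n := Fintype.equivFinOfCardEq hcard'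
  let M : Matrix (Fin n) (Fin n) ℝ := Matrix.of fun r c => u (σ.symm c) r
  -- Gram identity
  have hGram : ∀ a b, ⟪u a, u b⟫ = Matrix.fromBlocks G 0 0 (1 : Matrix (Fin (n - ∑ i, d i)) (Fin (n - ∑ i, d i)) ℝ) a b := by
    rintro (p | l) (q | l')
    · simp only [u, v', Sum.elim_inl, Matrix.fromBlocks_apply₁₁, hGdef, Matrix.of_apply]
    · simpa [u, Matrix.fromBlocks] using hvw p l'
    · simp only [u, Sum.elim_inl, Sum.elim_inr, Matrix.fromBlocks_apply₂₁, Matrix.zero_apply]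
      rw [real_inner_comm]
      exact hvw q l
    · simpa [u, Matrix.fromBlocks, Matrix.one_apply] using hw_inner l l'
  have hMTM : M.transpose * M = (Matrix.fromBlocks G 0 0 1).submatrix σ.symm σ.symm := by
    ext c c'
    simp only [Matrix.submatrix_apply]
    rw [← hGram]
    show ∑ r, M.transpose c r * M r c' = _
    simp only [Matrix.transpose_apply, M, Matrix.of_apply]
    simp [PiLp.inner_apply, mul_comm]
  have hdet2 : M.det ^ 2 = G.det := by
    have h1 : (M.transpose * M).det = G.det := by
      rw [hMTM, Matrix.det_submatrix_equiv_self, Matrix.det_fromBlocks_zero₂₁]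
      simp
    rw [← h1, Matrix.det_mul, Matrix.det_transpose, sq]
  have habs : ν ≤ |M.det| := by
    rw [← Real.sqrt_sq_eq_abs, hdet2]
    exact hνle.trans_eq (by rw [hGdef])
  have hMdet_ne : M.det ≠ 0 := by
    intro h
    rw [h] at habs
    simp at habs
    linarith
  have hMunit : IsUnit M.det := isUnit_iff_ne_zero.mpr hMdet_ne
  let B := Matrix.toEuclideanCLM (𝕜 := ℝ) M
  let B' := Matrix.toEuclideanCLM (𝕜 := ℝ) M⁻¹
  have h1 : B ∘L B' = 1 := by
    have h := (map_mul (Matrix.toEuclideanCLM (𝕜 := ℝ) (n := Fin n)) M M⁻¹).symm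
    rw [Matrix.mul_nonsing_inv _ hMunit, map_one] at h
    exact h
  have h2 : B' ∘L B = 1 := by
    have h := (map_mul (Matrix.toEuclideanCLM (𝕜 := ℝ) (n := Fin n)) M⁻¹ M).symm
    rw [Matrix.nonsing_inv_mul _ hMunit, map_one] at h
    exact h
  let A : (EuclideanSpace ℝ (Fin n)) ≃L[ℝ] (EuclideanSpace ℝ (Fin n)) := ContinuousLinearEquiv.equivOfInverse
    (ContinuousLinearMap.adjoint B) (ContinuousLinearMap.adjoint B')
    (fun x => by
      have : ContinuousLinearMap.adjoint B' ∘L ContinuousLinearMap.adjoint B = 1 := by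
        rw [← ContinuousLinearMap.adjoint_comp, h1]
        simp [ContinuousLinearMap.one_def, ContinuousLinearMap.adjoint_id]
      calc ContinuousLinearMap.adjoint B' (ContinuousLinearMap.adjoint B x)
          = (ContinuousLinearMap.adjoint B' ∘L ContinuousLinearMap.adjoint B) x := rfl
        _ = x := by rw [this]; rfl)
    (fun x => by
      have : ContinuousLinearMap.adjoint B ∘L ContinuousLinearMap.adjoint B' = 1 := by
        rw [← ContinuousLinearMap.adjoint_comp, h2]
        simp [ContinuousLinearMap.one_def, ContinuousLinearMap.adjoint_id]
      calc ContinuousLinearMap.adjoint B (ContinuousLinearMap.adjoint B' x)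
          = (ContinuousLinearMap.adjoint B ∘L ContinuousLinearMap.adjoint B') x := rfl
        _ = x := by rw [this]; rfl)
  refine ⟨A, ?_, ?_⟩
  · -- norm bound
    have hAcoe : (A : (EuclideanSpace ℝ (Fin n)) →L[ℝ] (EuclideanSpace ℝ (Fin n))) = ContinuousLinearMap.adjoint B := rfl
    have hAsymm : (A.symm : (EuclideanSpace ℝ (Fin n)) →L[ℝ] (EuclideanSpace ℝ (Fin n))) = ContinuousLinearMap.adjoint B' := rfl
    have hMent : ∀ r c, |M r c| ≤ (1:ℝ) := by
      intro r c
      have h3 : |u (σ.symm c) r| ≤ ‖u (σ.symm c)‖ := aux_abs_apply_le_norm _ _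
      have h4 : ‖u (σ.symm c)‖ = 1 := by
        rcases σ.symm c with p | l
        · exact hvnorm p
        · exact (stdOrthonormalBasis ℝ Sᗮ).orthonormal.1 _
      rw [h4] at h3
      exact h3
    have hBnorm : ‖B‖ ≤ (n:ℝ)^2 * 1 := aux_opnorm M zero_le_one hMent
    have hinv_pos : (0:ℝ) < ν⁻¹ := inv_pos.mpr hν
    have hadjent : ∀ r c, |M.adjugate r c| ≤ (n.factorial : ℝ) := by
      intro r c
      rw [Matrix.adjugate_apply]
      have h5 := Matrix.det_le (A := M.updateRow c (Pi.single r 1))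
        (abv := AbsoluteValue.abs) (x := (1:ℝ)) (fun i j => by
          rw [Matrix.updateRow_apply]
          split
          · rcases eq_or_ne j r with h | h <;> simp [Pi.single_apply, h]
          · simpa using hMent i j)
      simpa using h5
    have hMinvent : ∀ r c, |M⁻¹ r c| ≤ (n.factorial : ℝ) * ν⁻¹ := by
      intro r c
      rw [Matrix.inv_def]
      simp only [Matrix.smul_apply, smul_eq_mul, Ring.inverse_eq_inv']
      rw [abs_mul, abs_inv]
      have h6 : |M.det|⁻¹ ≤ ν⁻¹ := by
        apply inv_anti₀ hν habs
      calc |M.det|⁻¹ * |M.adjugate r c| ≤ ν⁻¹ * (n.factorial : ℝ) :=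
            mul_le_mul h6 (hadjent r c) (abs_nonneg _) hinv_pos.le
        _ = (n.factorial : ℝ) * ν⁻¹ := mul_comm _ _
    have hB'norm : ‖B'‖ ≤ (n:ℝ)^2 * ((n.factorial : ℝ) * ν⁻¹) :=
      aux_opnorm M⁻¹ (by positivity) hMinvent
    have hfact1 : (1:ℝ) ≤ (n.factorial : ℝ) * ν⁻¹ := by
      have := mul_le_mul_of_nonneg_right hν_le_fact hinv_pos.le
      rwa [mul_inv_cancel₀ hν.ne'] at this
    have hnormadj : ∀ T : (EuclideanSpace ℝ (Fin n)) →L[ℝ] (EuclideanSpace ℝ (Fin n)), ‖ContinuousLinearMap.adjoint T‖ = ‖T‖ := fun T =>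
      LinearIsometryEquiv.norm_map ContinuousLinearMap.adjoint T
    rw [hAcoe, hAsymm, hnormadj B, hnormadj B']
    have hn2 : (0:ℝ) ≤ (n:ℝ)^2 := by positivity
    calc ‖B‖ + ‖B'‖ ≤ (n:ℝ)^2 * 1 + (n:ℝ)^2 * ((n.factorial : ℝ) * ν⁻¹) :=
          add_le_add hBnorm hB'norm
      _ ≤ (n:ℝ)^2 * ((n.factorial : ℝ) * ν⁻¹) + (n:ℝ)^2 * ((n.factorial : ℝ) * ν⁻¹) :=
          add_le_add (by nlinarith) le_rfl
      _ = 2 * (n:ℝ)^2 * (n.factorial : ℝ) * ν⁻¹ := by ring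
      _ ≤ (2 * (n:ℝ)^2 * (n.factorial : ℝ) + 1) * ν⁻¹ := by nlinarith
  · -- orthogonality
    intro i j hij x hx y hy
    have hadj : ContinuousLinearMap.adjoint ((A.symm : (EuclideanSpace ℝ (Fin n)) →L[ℝ] (EuclideanSpace ℝ (Fin n)))) = B' := by
      have hAsymm : (A.symm : (EuclideanSpace ℝ (Fin n)) →L[ℝ] (EuclideanSpace ℝ (Fin n))) = ContinuousLinearMap.adjoint B' := rfl
      rw [hAsymm, ContinuousLinearMap.adjoint_adjoint]
    have hB'v : ∀ (i : Fin k) (j' : Fin (d i)),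
        B' (v i j') = EuclideanSpace.single (σ (Sum.inl ⟨i, j'⟩)) 1 := by
      intro i j'
      have hb : B (EuclideanSpace.single (σ (Sum.inl ⟨i, j'⟩)) 1) = v i j' := by
        ext r
        show Matrix.mulVec M (Pi.single (σ (Sum.inl ⟨i, j'⟩)) 1) r = _
        rw [Matrix.mulVec_single]
        simp only [mul_one, M, Matrix.of_apply, Equiv.symm_apply_apply]
        simp [u, v']
      rw [← hb]
      calc B' (B (EuclideanSpace.single (σ (Sum.inl ⟨i, j'⟩)) 1))
          = (B' ∘L B) (EuclideanSpace.single (σ (Sum.inl ⟨i, j'⟩)) 1) := rfl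
        _ = _ := by rw [h2]; rfl
    rw [hadj] at hx hy
    rw [← hN i, Submodule.map_span] at hx
    rw [← hN j, Submodule.map_span] at hy
    have hortho : Submodule.span ℝ ((B' : (EuclideanSpace ℝ (Fin n)) →ₗ[ℝ] (EuclideanSpace ℝ (Fin n))) '' Set.range (v i)) ⟂
        Submodule.span ℝ ((B' : (EuclideanSpace ℝ (Fin n)) →ₗ[ℝ] (EuclideanSpace ℝ (Fin n))) '' Set.range (v j)) := by
      rw [Submodule.isOrtho_span]
      rintro _ ⟨_, ⟨j₁, rfl⟩, rfl⟩ _ ⟨_, ⟨j₂, rfl⟩, rfl⟩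
      show ⟪B' (v i j₁), B' (v j j₂)⟫ = 0
      rw [hB'v i j₁, hB'v j j₂]
      rw [EuclideanSpace.inner_single_left]
      have hne : σ (Sum.inl (⟨j, j₂⟩ : ι)) ≠ σ (Sum.inl (⟨i, j₁⟩ : ι)) := by
        intro h
        apply hij
        have := Sum.inl.inj (σ.injective h)
        exact (Sigma.mk.inj_iff.mp this).1.symm
      rw [EuclideanSpace.single_apply, if_neg (Ne.symm hne)]
      simp
    exact hortho.inner_eq hx hy
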